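/- Let m be a positive integer, n an integer with 0 ≤ n < 2m, and a, b ∈ ℤ. Let τ lie in the upper half-plane and z ∈ ℂ. Then F^{[m](a,b)}_{n,m}(−1/τ, z/τ) = ((−iτ)^{1/2}/√(2m)) e^{πinb/m} e^{πiaz/τ} e^{−πia²/(2mτ)} e^{πim(z−a/m)²/(2τ)} g^{[m]}_{n,m}(−1/τ) ∑_{k=0}^{2m−1} e^{−πi(n+a)k/m} θ_{k,m}(τ, z), where (−iτ)^{1/2} denotes the principal branch. -/

import Mathlib

noncomputable section

open Complex

/-- `e2 w = exp (2 π i w)`; with `q = e^{2πiτ}`, the power `q^x` corresponds to `e2 (x * τ)`. -/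
def e2 (w : ℂ) : ℂ := Complex.exp (2 * (Real.pi : ℂ) * Complex.I * w)

/-- Jacobi-type theta function `θ^{(ε)}_{n,m}(τ, z) = ∑_{j∈ℤ} ε^j q^{m(j+n/(2m))²} e^{2πim(j+n/(2m))z}`. -/
def jtheta (ε n m τ z : ℂ) : ℂ :=
  ∑' j : ℤ, ε ^ j *
    e2 (m * ((j : ℂ) + n / (2 * m)) ^ 2 * τ + m * ((j : ℂ) + n / (2 * m)) * z)

/-- Mock theta function `Φ₁^{(ε)[m,s]}(τ, z₁, z₂)`. -/
def Phi1 (ε m s τ z₁ z₂ : ℂ) : ℂ :=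
  ∑' j : ℤ, ε ^ j *
    e2 (m * (j : ℂ) * (z₁ + z₂) + s * z₁ + (m * (j : ℂ) ^ 2 + s * (j : ℂ)) * τ) /
      (1 - e2 (z₁ + (j : ℂ) * τ))

/-- Dedekind eta function `η(τ) = q^{1/24} ∏_{k≥1} (1 - q^k)`. -/
def dedekindEta (τ : ℂ) : ℂ := e2 (τ / 24) * ∏' k : ℕ, (1 - e2 (((k : ℂ) + 1) * τ))

/-- Jacobi theta `ϑ₁₁(τ, z) = i ∑_{j∈ℤ} (−1)^j q^{(j+1/2)²/2} e^{2πi(j+1/2)z}`. -/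
def theta11 (τ z : ℂ) : ℂ :=
  Complex.I * ∑' j : ℤ, (-1 : ℂ) ^ j *
    e2 (((j : ℂ) + 1 / 2) ^ 2 / 2 * τ + ((j : ℂ) + 1 / 2) * z)

/-- Indefinite double sum `(∑_{j,p∈ℤ, 0<p≤j} − ∑_{j,p∈ℤ, j<p≤0}) f j p`. -/
def indefSum (f : ℤ → ℤ → ℂ) : ℂ :=
  ∑' jp : ℤ × ℤ,
    ((if 0 < jp.2 ∧ jp.2 ≤ jp.1 then f jp.1 jp.2 else 0) -
      (if jp.1 < jp.2 ∧ jp.2 ≤ 0 then f jp.1 jp.2 else 0))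

/-- `g^{[m]}_{n,ν}(τ)`. -/
def gfun (m : ℂ) (n ν : ℤ) (τ : ℂ) : ℂ :=
  indefSum fun j p =>
    (-1 : ℂ) ^ j *
      e2 (((m + 1 / 2) * ((j : ℂ) + (ν : ℂ) - ((ν : ℂ) + 1 / 2) / (2 * m + 1)) ^ 2 -
        m * ((p : ℂ) + (ν : ℂ) - (n : ℂ) / (2 * m)) ^ 2) * τ)

/-- `h^{[m]}_{n,ν}(τ, z)`. -/
def hfun (m : ℂ) (n ν : ℤ) (τ z : ℂ) : ℂ :=
  ∑' j : ℤ,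
    e2 (m * (j : ℂ) * z + (n : ℂ) * z / 2 +
        (m * (j : ℂ) ^ 2 + (n : ℂ) * ((j : ℂ) + (ν : ℂ))) * τ) /
      (1 - e2 (m * z + 2 * m * ((j : ℂ) + (ν : ℂ)) * τ))

/-- `G^{[m]}_{n,ν}(τ, z)`. -/
def Gfun (m : ℂ) (n ν : ℤ) (τ z : ℂ) : ℂ :=
  gfun m n ν τ * jtheta 1 (n : ℂ) m τ z +
    (-1 : ℂ) ^ ν * e2 (-(m * (ν : ℂ) ^ 2) * τ) *
      jtheta (-1) ((ν : ℂ) + 1 / 2) (m + 1 / 2) τ 0 * hfun m n ν τ z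

/-- `F^{[m](a,b)}_{n,ν}(τ, z)`. -/
def Ffun (m : ℂ) (a b n ν : ℤ) (τ z : ℂ) : ℂ :=
  e2 ((a : ℂ) * z / 2 + (a : ℂ) ^ 2 / (4 * m) * τ) *
    Gfun m n ν τ (z + (a : ℂ) * τ / m + (b : ℂ) / m)

/-- The coefficient `f_{j,k}` of Lemma 3.1:
`f_{j,k} = (−1)^j q^{(m+1/2)(j+s/(2m+1))² − k²/(4m)} e^{−2πijm(z₁−z₂)+πik(z₁−z₂)}`. -/
def fcoef (m s τ z₁ z₂ : ℂ) (j k : ℤ) : ℂ :=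
  (-1 : ℂ) ^ j *
    e2 (((m + 1 / 2) * ((j : ℂ) + s / (2 * m + 1)) ^ 2 - (k : ℂ) ^ 2 / (4 * m)) * τ +
      (-((j : ℂ) * m) + (k : ℂ) / 2) * (z₁ - z₂))

/-- `F^{[m](a,b)}_{n,m}(τ, z) = e^{πiaz} q^{a²/(4m)} g^{[m]}_{n,m}(τ) θ_{n,m}(τ, z+aτ/m+b/m)`,
the specialization of `F^{[m](a,b)}_{n,ν}` at `ν = m` (where `θ^{(−)}_{m+1/2,m+1/2}(τ,0) = 0`). -/
def Fspecial (m : ℕ) (a b n : ℤ) (τ z : ℂ) : ℂ :=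
  e2 ((a : ℂ) * z / 2 + (a : ℂ) ^ 2 / (4 * (m : ℂ)) * τ) * gfun (m : ℂ) n (m : ℤ) τ *
    jtheta 1 (n : ℂ) (m : ℂ) τ (z + (a : ℂ) * τ / (m : ℂ) + (b : ℂ) / (m : ℂ))

private lemma jtheta_eq_jacobiTheta₂ {m : ℂ} (hm : m ≠ 0) (n τ z : ℂ) :
    jtheta 1 n m τ z
      = e2 (n ^ 2 / (4 * m) * τ + n * z / 2) * jacobiTheta₂ (n * τ + m * z) (2 * m * τ) := by
  rw [jtheta, jacobiTheta₂, ← tsum_mul_left]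
  refine tsum_congr fun j => ?_
  rw [one_zpow, one_mul, jacobiTheta₂_term, e2, e2, ← Complex.exp_add]
  congr 1
  field_simp
  ring

private lemma jacobiTheta₂_add_int (u t : ℂ) (b : ℤ) :
    jacobiTheta₂ (u + (b : ℂ)) t = jacobiTheta₂ u t := by
  simp only [jacobiTheta₂]
  refine tsum_congr fun j => ?_
  rw [jacobiTheta₂_term, jacobiTheta₂_term, Complex.exp_eq_exp_iff_exists_int]
  exact ⟨j * b, by push_cast; ring⟩

private def finIntEquiv (N : ℕ) (hN : 0 < N) : Fin N × ℤ ≃ ℤ where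
  toFun p := (N : ℤ) * p.2 + ((p.1 : ℕ) : ℤ)
  invFun l := (⟨(l % (N : ℤ)).toNat, by
      have hN' : ((N : ℤ)) ≠ 0 := by exact_mod_cast hN.ne'
      have h0 : 0 ≤ l % (N : ℤ) := Int.emod_nonneg l hN'
      have h1 : l % (N : ℤ) < N := Int.emod_lt_of_pos l (by exact_mod_cast hN)
      omega⟩, l / (N : ℤ))
  left_inv p := by
    obtain ⟨⟨k, hk⟩, j⟩ := p
    have hN' : ((N : ℤ)) ≠ 0 := by exact_mod_cast hN.ne'
    have h1 : ((N : ℤ) * j + (k : ℤ)) % N = (k : ℤ) := by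
      rw [add_comm, Int.add_mul_emod_self_left]
      exact Int.emod_eq_of_lt (by positivity) (by exact_mod_cast hk)
    have h2 : ((N : ℤ) * j + (k : ℤ)) / N = j := by
      rw [add_comm, mul_comm, Int.add_mul_ediv_right _ _ hN',
        Int.ediv_eq_zero_of_lt (by positivity) (by exact_mod_cast hk), zero_add]
    simp only [Prod.mk.injEq, Fin.mk.injEq]
    exact ⟨by rw [h1]; exact Int.toNat_natCast k, h2⟩
  right_inv l := by
    have hN' : ((N : ℤ)) ≠ 0 := by exact_mod_cast hN.ne'
    have h0 : 0 ≤ l % (N : ℤ) := Int.emod_nonneg l hN'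
    simp only []
    rw [Int.toNat_of_nonneg h0]
    exact Int.mul_ediv_add_emod l N

private lemma tsum_int_split (N : ℕ) (hN : 0 < N) (F : ℤ → ℂ) (hF : Summable F) :
    ∑' l : ℤ, F l = ∑ k ∈ Finset.range N, ∑' j : ℤ, F ((N : ℤ) * j + (k : ℤ)) := by
  rw [← (finIntEquiv N hN).tsum_eq F]
  have hs : Summable (fun p : Fin N × ℤ => F ((N : ℤ) * p.2 + ((p.1 : ℕ) : ℤ))) :=
    (Equiv.summable_iff (finIntEquiv N hN)).2 hF
  rw [show (fun p : Fin N × ℤ => F (finIntEquiv N hN p))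
      = fun p : Fin N × ℤ => F ((N : ℤ) * p.2 + ((p.1 : ℕ) : ℤ)) from rfl]
  rw [Summable.tsum_prod' hs (fun b => hs.prod_factor b), tsum_fintype]
  exact Fin.sum_univ_eq_sum_range (fun k => ∑' j : ℤ, F ((N : ℤ) * j + (k : ℤ))) N

private lemma sum_e2_jtheta (m : ℕ) (hm : 0 < m) (c : ℤ) {τ : ℂ} (hτ : 0 < τ.im) (z : ℂ) :
    ∑ k ∈ Finset.range (2 * m),
        e2 (-((c : ℂ) * (k : ℂ)) / (2 * (m : ℂ))) * jtheta 1 (k : ℂ) (m : ℂ) τ z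
      = jacobiTheta₂ (z / 2 - (c : ℂ) / (2 * (m : ℂ))) (τ / (2 * (m : ℂ))) := by
  have hm' : ((m : ℂ)) ≠ 0 := Nat.cast_ne_zero.2 hm.ne'
  have ht : 0 < (τ / (2 * (m : ℂ))).im := by
    have h : τ / (2 * (m : ℂ)) = τ * ((((2 * m : ℝ))⁻¹ : ℝ) : ℂ) := by
      push_cast; field_simp
    rw [h, Complex.mul_im]
    simp only [Complex.ofReal_re, Complex.ofReal_im, mul_zero, zero_add]
    positivity
  have hsum : Summable
      (fun l : ℤ => jacobiTheta₂_term l (z / 2 - (c : ℂ) / (2 * (m : ℂ))) (τ / (2 * (m : ℂ)))) :=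
    (summable_jacobiTheta₂_term_iff _ _).2 ht
  rw [jacobiTheta₂, tsum_int_split (2 * m) (by positivity) _ hsum]
  refine Finset.sum_congr rfl fun k hk => ?_
  rw [jtheta, ← tsum_mul_left]
  refine tsum_congr fun j => ?_
  rw [one_zpow, one_mul, e2, e2, ← Complex.exp_add, jacobiTheta₂_term,
    Complex.exp_eq_exp_iff_exists_int]
  refine ⟨j * c, ?_⟩
  push_cast
  field_simp
  ring

private lemma cpow_half_mul_ofReal {w : ℂ} (hw : w ≠ 0) {r : ℝ} (hr : 0 < r) :
    (w * (r : ℂ)) ^ (1 / 2 : ℂ) = w ^ (1 / 2 : ℂ) * (Real.sqrt r : ℂ) := by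
  have h1 : w * (r : ℂ) ≠ 0 := mul_ne_zero hw (by exact_mod_cast hr.ne')
  rw [Complex.cpow_def_of_ne_zero h1, Complex.cpow_def_of_ne_zero hw]
  have hlog : Complex.log (w * (r : ℂ)) = Complex.log w + (Real.log r : ℂ) := by
    unfold Complex.log
    rw [norm_mul, Complex.norm_of_nonneg hr.le,
      Real.log_mul (norm_ne_zero_iff.2 hw) hr.ne', mul_comm w ((r : ℂ)),
      Complex.arg_real_mul w hr]
    push_cast
    ring
  rw [hlog, add_mul, Complex.exp_add]
  congr 1
  rw [show (Real.log r : ℂ) * (1 / 2 : ℂ) = ((Real.log r * (1 / 2) : ℝ) : ℂ) by push_cast; ring,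
    ← Complex.ofReal_exp, Real.sqrt_eq_rpow, Real.rpow_def_of_pos hr]

theorem stmt_18 (m : ℕ) (hm : 0 < m) (n : ℤ) (hn : 0 ≤ n ∧ n < 2 * (m : ℤ)) (a b : ℤ)
    (τ : ℂ) (hτ : 0 < τ.im) (z : ℂ) :
    Fspecial m a b n (-1 / τ) (z / τ) =
      (-(Complex.I * τ)) ^ ((1 : ℂ) / 2) / (Real.sqrt (2 * (m : ℝ)) : ℂ) *
        e2 ((n : ℂ) * (b : ℂ) / (2 * (m : ℂ))) * e2 ((a : ℂ) * z / (2 * τ)) *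
        e2 (-((a : ℂ) ^ 2) / (4 * (m : ℂ) * τ)) *
        e2 ((m : ℂ) * (z - (a : ℂ) / (m : ℂ)) ^ 2 / (4 * τ)) *
        gfun (m : ℂ) n (m : ℤ) (-1 / τ) *
        ∑ k ∈ Finset.range (2 * m),
          e2 (-(((n : ℂ) + (a : ℂ)) * (k : ℂ)) / (2 * (m : ℂ))) *
            jtheta 1 (k : ℂ) (m : ℂ) τ z := by
  have hm' : ((m : ℕ) : ℂ) ≠ 0 := Nat.cast_ne_zero.2 hm.ne'
  have hτ0 : τ ≠ 0 := by intro h; rw [h] at hτ; simp at hτ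
  have hS : (∑ k ∈ Finset.range (2 * m),
        e2 (-(((n : ℂ) + (a : ℂ)) * (k : ℂ)) / (2 * (m : ℂ))) *
          jtheta 1 (k : ℂ) (m : ℂ) τ z)
      = jacobiTheta₂ (z / 2 - ((n : ℂ) + (a : ℂ)) / (2 * (m : ℂ))) (τ / (2 * (m : ℂ))) := by
    have hsum := sum_e2_jtheta m hm (n + a) hτ z
    push_cast at hsum
    exact hsum
  rw [Fspecial, jtheta_eq_jacobiTheta₂ hm', hS]
  rw [show (n : ℂ) * (-1 / τ) +
        (m : ℂ) * (z / τ + (a : ℂ) * (-1 / τ) / (m : ℂ) + (b : ℂ) / (m : ℂ))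
      = ((m : ℂ) * z - (n : ℂ) - (a : ℂ)) / τ + (b : ℂ) from by
    linear_combination ((b : ℂ) - (a : ℂ) / τ) * (mul_inv_cancel₀ hm')]
  rw [jacobiTheta₂_add_int]
  rw [show 2 * (m : ℂ) * (-1 / τ) = -1 / (τ / (2 * (m : ℂ))) from by
    rw [div_div_eq_mul_div, neg_one_mul]; ring]
  set t : ℂ := τ / (2 * (m : ℂ)) with htdef
  set ξ : ℂ := z / 2 - ((n : ℂ) + (a : ℂ)) / (2 * (m : ℂ)) with hξdef
  have ht0 : t ≠ 0 := div_ne_zero hτ0 (by simpa using hm')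
  have hkey : jacobiTheta₂ (((m : ℂ) * z - (n : ℂ) - (a : ℂ)) / τ) (-1 / t)
      = (-Complex.I * t) ^ (1 / 2 : ℂ) * Complex.exp ((Real.pi : ℂ) * Complex.I * ξ ^ 2 / t) *
        jacobiTheta₂ ξ t := by
    have h3 : ξ / t = ((m : ℂ) * z - (n : ℂ) - (a : ℂ)) / τ := by
      rw [hξdef, htdef, div_div_eq_mul_div]
      linear_combination (-((n : ℂ) + (a : ℂ)) / τ) * (mul_inv_cancel₀ hm')
    have hne : ((-Complex.I * t) ^ (1 / 2 : ℂ)) ≠ 0 := by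
      intro h
      rw [Complex.cpow_eq_zero_iff] at h
      exact (mul_ne_zero (neg_ne_zero.2 Complex.I_ne_zero) ht0) h.1
    rw [jacobiTheta₂_functional_equation ξ t, h3]
    rw [show (Real.pi : ℂ) * Complex.I * ξ ^ 2 / t
        = -(-(Real.pi : ℂ) * Complex.I * ξ ^ 2 / t) from by ring, Complex.exp_neg]
    field_simp
  rw [hkey]
  have hw : -(Complex.I * τ) ≠ 0 := neg_ne_zero.2 (mul_ne_zero Complex.I_ne_zero hτ0)
  have hcp : (-Complex.I * t) ^ (1 / 2 : ℂ)
      = (-(Complex.I * τ)) ^ (1 / 2 : ℂ) * ((Real.sqrt (2 * (m : ℝ)) : ℝ) : ℂ)⁻¹ := by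
    have h4 : -Complex.I * t = (-(Complex.I * τ)) * ((((2 * (m : ℝ)))⁻¹ : ℝ) : ℂ) := by
      rw [htdef]; push_cast; ring
    rw [h4, cpow_half_mul_ofReal hw (by positivity), Real.sqrt_inv, Complex.ofReal_inv]
  rw [hcp]
  have hexp : e2 ((a : ℂ) * (z / τ) / 2 + (a : ℂ) ^ 2 / (4 * (m : ℂ)) * (-1 / τ)) *
        e2 ((n : ℂ) ^ 2 / (4 * (m : ℂ)) * (-1 / τ) +
          (n : ℂ) * (z / τ + (a : ℂ) * (-1 / τ) / (m : ℂ) + (b : ℂ) / (m : ℂ)) / 2) *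
        Complex.exp ((Real.pi : ℂ) * Complex.I * ξ ^ 2 / t)
      = e2 ((n : ℂ) * (b : ℂ) / (2 * (m : ℂ))) * e2 ((a : ℂ) * z / (2 * τ)) *
        e2 (-((a : ℂ) ^ 2) / (4 * (m : ℂ) * τ)) *
        e2 ((m : ℂ) * (z - (a : ℂ) / (m : ℂ)) ^ 2 / (4 * τ)) := by
    rw [hξdef, htdef, e2, e2, e2, e2, e2, e2, ← Complex.exp_add, ← Complex.exp_add,
      ← Complex.exp_add, ← Complex.exp_add, ← Complex.exp_add]
    congr 1
    rw [div_div_eq_mul_div]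
    linear_combination (2 * (Real.pi : ℂ) * Complex.I *
      (-((n : ℂ) * z) / (2 * τ) + (n : ℂ) * ((n : ℂ) + 2 * (a : ℂ)) / (4 * (m : ℂ) * τ))) *
      (mul_inv_cancel₀ hm')
  linear_combination ((-(Complex.I * τ)) ^ (1 / 2 : ℂ) *
    ((Real.sqrt (2 * (m : ℝ)) : ℝ) : ℂ)⁻¹ * gfun (m : ℂ) n (m : ℤ) (-1 / τ) *
    jacobiTheta₂ ξ t) * hexp
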